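/- Filtering preserves shift-orthonormality across levels: let m ≥ 1, N divisible by 2^{m+1}, ψ ∈ Π[N] with 2^m-shift-orthonormal translates (⟨ψ[·−2^m k], ψ[·−2^m n]⟩ = δ[k−n]), and let h be an N/2^m-periodic filter whose frequency response satisfies |ĥ[n]|² + |ĥ[n + N/2^{m+1}]|² = 2 for all n. Define ψ'[n] = ∑_{k=0}^{N/2^m−1} h[k] ψ[n − 2^m k]. Then the 2^{m+1}-shifts of ψ' are orthonormal: ⟨ψ'[·−2^{m+1} k], ψ'[·−2^{m+1} n]⟩ = δ[k−n]. -/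

import Mathlib

open Finset Complex

/-- The primitive `M`-th root of unity `ω = e^{2πi/M}`. -/
noncomputable def omegaN (M : ℕ) : ℂ := Complex.exp (2 * Real.pi * Complex.I / M)

/-- The DFT of a real `M`-periodic filter `h`:
`ĥ[n] = ∑_{k=0}^{M-1} h[k] e^{−2πikn/M}`. -/
noncomputable def filterDFT (M : ℕ) (h : ℤ → ℝ) (n : ℤ) : ℂ :=
  ∑ k ∈ Finset.range M, (h k : ℂ) * omegaN M ^ (-((k : ℤ) * n))

lemma per_int {α : Type*} (f : ℤ → α) (P : ℕ) (hf : ∀ k : ℤ, f (k + P) = f k) :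
    ∀ (q : ℤ) (k : ℤ), f (k + P * q) = f k := by
  intro q
  induction q using Int.induction_on with
  | zero => simp
  | succ i ih =>
      intro k
      have h1 : k + (P:ℤ) * (i + 1) = (k + P * i) + P := by ring
      rw [h1, hf, ih]
  | pred i ih =>
      intro k
      have h1 : k + (P:ℤ) * (-i) = (k + P * (-(i:ℤ) - 1)) + P := by ring
      have h2 := hf (k + (P:ℤ) * (-(i:ℤ) - 1))
      rw [← h1] at h2
      rw [← h2]
      exact ih k

lemma per_dvd {α : Type*} (f : ℤ → α) (P : ℕ) (hf : ∀ k : ℤ, f (k + P) = f k) {a b : ℤ}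
    (hab : (P : ℤ) ∣ (a - b)) : f a = f b := by
  obtain ⟨q, hq⟩ := hab
  have h1 : a = b + (P : ℤ) * q := by linarith
  rw [h1, per_int f P hf]

lemma sum_shift_one (f : ℤ → ℝ) (P : ℕ) (hf : ∀ k : ℤ, f (k + P) = f k) :
    ∑ j ∈ range P, f ((j : ℤ) + 1) = ∑ j ∈ range P, f (j : ℤ) := by
  have h1 := Finset.sum_range_succ' (fun i : ℕ => f (i : ℤ)) P
  have h2 := Finset.sum_range_succ (fun i : ℕ => f (i : ℤ)) P
  have h3 : f ((P : ℕ) : ℤ) = f 0 := by simpa using hf 0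
  have h4 : ∑ i ∈ range P, f (((i + 1 : ℕ)) : ℤ) = ∑ j ∈ range P, f ((j : ℤ) + 1) := by
    refine Finset.sum_congr rfl fun i _ => ?_
    push_cast; ring_nf
  rw [h4] at h1
  rw [h2] at h1
  have : f ((P:ℕ):ℤ) = f ((0:ℕ):ℤ) := by simpa using h3
  linarith [h1, this]

lemma sum_shift_nat (f : ℤ → ℝ) (P : ℕ) (hf : ∀ k : ℤ, f (k + P) = f k) :
    ∀ s : ℕ, ∑ j ∈ range P, f ((j : ℤ) + s) = ∑ j ∈ range P, f (j : ℤ) := by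
  intro s
  induction s with
  | zero => simp
  | succ s ih =>
      have hg : ∀ k : ℤ, f ((k + (P:ℤ)) + s) = f (k + s) := fun k => by
        rw [show k + (P:ℤ) + s = (k + s) + P by ring]; exact hf (k + s)
      have h1 := sum_shift_one (fun x => f (x + s)) P hg
      calc ∑ j ∈ range P, f ((j : ℤ) + (s + 1 : ℕ))
          = ∑ j ∈ range P, f (((j : ℤ) + 1) + s) := by
            refine Finset.sum_congr rfl fun j _ => ?_
            congr 1; push_cast; ring
        _ = ∑ j ∈ range P, f ((j : ℤ) + s) := h1
        _ = ∑ j ∈ range P, f (j : ℤ) := ih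

lemma sum_shift (f : ℤ → ℝ) (P : ℕ) (hP : 0 < P) (hf : ∀ k : ℤ, f (k + P) = f k) (t : ℤ) :
    ∑ j ∈ range P, f ((j : ℤ) + t) = ∑ j ∈ range P, f (j : ℤ) := by
  have hPz : (P : ℤ) ≠ 0 := by exact_mod_cast hP.ne'
  set s := (t % P).toNat with hs
  have hst : ((s : ℤ)) = t % P := Int.toNat_of_nonneg (Int.emod_nonneg t hPz)
  have hdvd : (P : ℤ) ∣ (t - s) := ⟨t / P, by rw [hst, Int.emod_def]; ring⟩
  have h1 : ∀ j : ℤ, f (j + t) = f (j + s) := fun j =>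
    per_dvd f P hf (by rw [show (j + t) - (j + (s:ℤ)) = t - s by ring]; exact hdvd)
  calc ∑ j ∈ range P, f ((j : ℤ) + t) = ∑ j ∈ range P, f ((j : ℤ) + s) :=
        Finset.sum_congr rfl fun j _ => h1 j
    _ = ∑ j ∈ range P, f (j : ℤ) := sum_shift_nat f P hf s

lemma sum_omega (M : ℕ) (hM : 0 < M) (a : ℤ) :
    ∑ n ∈ range M, omegaN M ^ (a * n) = if (M : ℤ) ∣ a then (M : ℂ) else 0 := by
  have hprim := Complex.isPrimitiveRoot_exp M hM.ne'
  have hω : omegaN M ≠ 0 := Complex.exp_ne_zero _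
  have hpow : ∀ n : ℕ, omegaN M ^ (a * n) = (omegaN M ^ a) ^ n := by
    intro n
    rw [← zpow_natCast (omegaN M ^ a) n, ← zpow_mul]
  by_cases hd : (M : ℤ) ∣ a
  · have h1 : omegaN M ^ a = 1 := (hprim.zpow_eq_one_iff_dvd a).mpr hd
    rw [if_pos hd]
    simp [hpow, h1]
  · have h1 : omegaN M ^ a ≠ 1 := fun hc => hd ((hprim.zpow_eq_one_iff_dvd a).mp hc)
    rw [if_neg hd]
    have hone : omegaN M ^ M = 1 := hprim.pow_eq_one
    have h2 : (omegaN M ^ a) ^ M = 1 := by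
      rw [← zpow_natCast (omegaN M ^ a) M, ← zpow_mul, mul_comm, zpow_mul, zpow_natCast,
        hone, one_zpow]
    calc ∑ n ∈ range M, omegaN M ^ (a * n) = ∑ n ∈ range M, (omegaN M ^ a) ^ n :=
          Finset.sum_congr rfl fun n _ => hpow n
      _ = ((omegaN M ^ a) ^ M - 1) / (omegaN M ^ a - 1) := geom_sum_eq h1 M
      _ = 0 := by rw [h2]; simp

lemma sum_ind_pick {β : Type*} [CommRing β] (M : ℕ) (hM : 0 < M) (g : ℤ → β)
    (hg : ∀ x y : ℤ, (M : ℤ) ∣ (x - y) → g x = g y) (t0 : ℤ) (w : β) :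
    ∑ l ∈ Finset.range M, g l * (if (M : ℤ) ∣ ((l : ℤ) - t0) then w else 0) = g t0 * w := by
  have hMz : (M : ℤ) ≠ 0 := by exact_mod_cast hM.ne'
  set l0 := (t0 % M).toNat with hl0
  have h0 : (l0 : ℤ) = t0 % M := Int.toNat_of_nonneg (Int.emod_nonneg _ hMz)
  have hlt : l0 < M := by
    have := Int.emod_lt_of_pos t0 (by exact_mod_cast hM : (0:ℤ) < M)
    omega
  have hdvd0 : (M : ℤ) ∣ ((l0 : ℤ) - t0) := ⟨-(t0 / M), by rw [h0, Int.emod_def]; ring⟩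
  rw [Finset.sum_eq_single l0]
  · rw [if_pos hdvd0, hg _ _ hdvd0]
  · intro b hb hne
    rw [if_neg, mul_zero]
    intro hc
    have hd : (M : ℤ) ∣ ((b : ℤ) - l0) := by
      have := dvd_sub hc hdvd0
      have he : ((b : ℤ) - t0) - ((l0 : ℤ) - t0) = (b : ℤ) - l0 := by ring
      rwa [he] at this
    have hb' := Finset.mem_range.mp hb
    have habs : |(b : ℤ) - l0| < (M : ℤ) := abs_lt.mpr ⟨by omega, by omega⟩
    have := Int.eq_zero_of_abs_lt_dvd hd habs
    exact hne (by omega)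
  · intro hc; exact absurd (Finset.mem_range.mpr hlt) hc

/-- Filtering preserves shift-orthonormality across decomposition levels:
if the `2^m`-shifts of `ψ` are orthonormal and the `N/2^m`-periodic filter `h`
satisfies `|ĥ[n]|² + |ĥ[n+N/2^{m+1}]|² = 2`, then the `2^{m+1}`-shifts of
`ψ'[n] = ∑_k h[k] ψ[n − 2^m k]` are orthonormal. -/
theorem filtered_shift_orthonormal (N m : ℕ) (hm : 1 ≤ m)
    (hdvd : 2 ^ (m + 1) ∣ N) (hN : 0 < N)
    (ψ : ℤ → ℝ) (h : ℤ → ℝ)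
    (hψper : ∀ k : ℤ, ψ (k + N) = ψ k)
    (hhper : ∀ k : ℤ, h (k + (N / 2 ^ m : ℕ)) = h k)
    (hfilter : ∀ n : ℤ, ‖filterDFT (N / 2 ^ m) h n‖ ^ 2 +
      ‖filterDFT (N / 2 ^ m) h (n + (N / 2 ^ (m + 1) : ℕ))‖ ^ 2 = 2)
    (hortho : ∀ k n : ℕ, k < N / 2 ^ m → n < N / 2 ^ m →
      ∑ j ∈ Finset.range N, ψ ((j : ℤ) - 2 ^ m * k) * ψ ((j : ℤ) - 2 ^ m * n) =
        if k = n then 1 else 0) :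
    ∀ k n : ℕ, k < N / 2 ^ (m + 1) → n < N / 2 ^ (m + 1) →
      ∑ j ∈ Finset.range N,
          (∑ l ∈ Finset.range (N / 2 ^ m),
            h l * ψ (((j : ℤ) - 2 ^ (m + 1) * k) - 2 ^ m * l)) *
          (∑ l ∈ Finset.range (N / 2 ^ m),
            h l * ψ (((j : ℤ) - 2 ^ (m + 1) * n) - 2 ^ m * l)) =
        if k = n then 1 else 0 := by
  intro k n hk hn
  set M := N / 2 ^ m with hMdef
  set L := N / 2 ^ (m + 1) with hLdef
  have h2m : (2 : ℕ) ^ m ∣ N := dvd_trans (pow_dvd_pow 2 (Nat.le_succ m)) hdvd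
  have hNM : 2 ^ m * M = N := Nat.mul_div_cancel' h2m
  have hNL : 2 ^ (m + 1) * L = N := Nat.mul_div_cancel' hdvd
  have h2mpos : 0 < (2 : ℕ) ^ m := pow_pos (by norm_num) m
  have hMpos : 0 < M := by
    rcases Nat.eq_zero_or_pos M with h0 | h0
    · rw [← hNM, h0, mul_zero] at hN; exact absurd hN (lt_irrefl 0)
    · exact h0
  have hML : M = 2 * L := by
    refine Nat.eq_of_mul_eq_mul_left h2mpos ?_
    rw [hNM, ← hNL]; ring
  have hLpos : 0 < L := by omega
  have hMz : (M : ℤ) ≠ 0 := by exact_mod_cast hMpos.ne'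
  have hMC0 : (M : ℂ) ≠ 0 := by exact_mod_cast hMpos.ne'
  set d : ℤ := (k : ℤ) - n with hd
  have hψdvd : ∀ a b : ℤ, (N : ℤ) ∣ (a - b) → ψ a = ψ b := fun a b hab => per_dvd ψ N hψper hab
  have hhdvd : ∀ a b : ℤ, (M : ℤ) ∣ (a - b) → h a = h b := fun a b hab => per_dvd h M hhper hab
  have hprimM := Complex.isPrimitiveRoot_exp M hMpos.ne'
  have hζ0 : omegaN M ≠ 0 := Complex.exp_ne_zero _
  -- extended orthonormality
  have key : ∀ e : ℤ, (∑ j ∈ Finset.range N, ψ (j : ℤ) * ψ ((j : ℤ) - 2 ^ m * e)) =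
      if (M : ℤ) ∣ e then 1 else 0 := by
    intro e
    set r := (e % M).toNat with hr
    have hre : (r : ℤ) = e % M := Int.toNat_of_nonneg (Int.emod_nonneg e hMz)
    have hrM : r < M := by
      have h1 : e % (M : ℤ) < M := Int.emod_lt_of_pos e (by exact_mod_cast hMpos)
      omega
    have hdvdre : (M : ℤ) ∣ ((r : ℤ) - e) := ⟨-(e / M), by rw [hre, Int.emod_def]; ring⟩
    have h1 : ∀ j : ℤ, ψ (j - 2 ^ m * e) = ψ (j - 2 ^ m * r) := by
      intro j
      apply hψdvd
      rw [show (j - 2 ^ m * e) - (j - 2 ^ m * (r : ℤ)) = 2 ^ m * ((r : ℤ) - e) by ring,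
        show ((N : ℤ)) = 2 ^ m * (M : ℤ) by exact_mod_cast hNM.symm]
      exact mul_dvd_mul_left _ hdvdre
    have h2 := hortho 0 r hMpos hrM
    simp only [Nat.cast_zero, mul_zero, sub_zero] at h2
    calc ∑ j ∈ Finset.range N, ψ (j : ℤ) * ψ ((j : ℤ) - 2 ^ m * e)
        = ∑ j ∈ Finset.range N, ψ (j : ℤ) * ψ ((j : ℤ) - 2 ^ m * r) :=
          Finset.sum_congr rfl fun j _ => by rw [h1]
      _ = if 0 = r then 1 else 0 := h2
      _ = if (M : ℤ) ∣ e then 1 else 0 := by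
          by_cases hdv : (M : ℤ) ∣ e
          · have : e % (M : ℤ) = 0 := Int.emod_eq_zero_of_dvd hdv
            have hr0 : r = 0 := by omega
            rw [if_pos hdv, if_pos hr0.symm]
          · have : e % (M : ℤ) ≠ 0 := fun hc => hdv (Int.dvd_of_emod_eq_zero hc)
            have hr0 : r ≠ 0 := by omega
            rw [if_neg hdv, if_neg (fun hc => hr0 hc.symm)]
  -- step 1 : expand the double filter sum
  have step1 : ∑ j ∈ Finset.range N,
      (∑ l ∈ Finset.range M, h l * ψ (((j : ℤ) - 2 ^ (m + 1) * k) - 2 ^ m * l)) *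
      (∑ l ∈ Finset.range M, h l * ψ (((j : ℤ) - 2 ^ (m + 1) * n) - 2 ^ m * l)) =
      ∑ l ∈ Finset.range M, ∑ l' ∈ Finset.range M, h l * h l' *
        (if (M : ℤ) ∣ ((l' : ℤ) - ((l : ℤ) + 2 * d)) then (1 : ℝ) else 0) := by
    calc ∑ j ∈ Finset.range N,
        (∑ l ∈ Finset.range M, h l * ψ (((j : ℤ) - 2 ^ (m + 1) * k) - 2 ^ m * l)) *
        (∑ l ∈ Finset.range M, h l * ψ (((j : ℤ) - 2 ^ (m + 1) * n) - 2 ^ m * l))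
        = ∑ j ∈ Finset.range N, ∑ l ∈ Finset.range M, ∑ l' ∈ Finset.range M,
            (h l * ψ (((j : ℤ) - 2 ^ (m + 1) * k) - 2 ^ m * l)) *
            (h l' * ψ (((j : ℤ) - 2 ^ (m + 1) * n) - 2 ^ m * l')) :=
          Finset.sum_congr rfl fun j _ => Finset.sum_mul_sum _ _ _ _
      _ = ∑ l ∈ Finset.range M, ∑ j ∈ Finset.range N, ∑ l' ∈ Finset.range M,
            (h l * ψ (((j : ℤ) - 2 ^ (m + 1) * k) - 2 ^ m * l)) *
            (h l' * ψ (((j : ℤ) - 2 ^ (m + 1) * n) - 2 ^ m * l')) := Finset.sum_comm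
      _ = ∑ l ∈ Finset.range M, ∑ l' ∈ Finset.range M, ∑ j ∈ Finset.range N,
            (h l * ψ (((j : ℤ) - 2 ^ (m + 1) * k) - 2 ^ m * l)) *
            (h l' * ψ (((j : ℤ) - 2 ^ (m + 1) * n) - 2 ^ m * l')) :=
          Finset.sum_congr rfl fun l _ => Finset.sum_comm
      _ = ∑ l ∈ Finset.range M, ∑ l' ∈ Finset.range M, h l * h l' *
            (if (M : ℤ) ∣ ((l' : ℤ) - ((l : ℤ) + 2 * d)) then (1 : ℝ) else 0) := by
          refine Finset.sum_congr rfl fun l _ => Finset.sum_congr rfl fun l' _ => ?_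
          have hfp : ∀ x : ℤ,
              ψ (x + (N : ℤ) - 2 ^ (m + 1) * k - 2 ^ m * l) *
              ψ (x + (N : ℤ) - 2 ^ (m + 1) * n - 2 ^ m * l') =
              ψ (x - 2 ^ (m + 1) * k - 2 ^ m * l) *
              ψ (x - 2 ^ (m + 1) * n - 2 ^ m * l') := by
            intro x
            rw [show x + (N : ℤ) - 2 ^ (m + 1) * k - 2 ^ m * l =
                (x - 2 ^ (m + 1) * k - 2 ^ m * l) + N by ring, hψper,
              show x + (N : ℤ) - 2 ^ (m + 1) * n - 2 ^ m * l' =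
                (x - 2 ^ (m + 1) * n - 2 ^ m * l') + N by ring, hψper]
          have hshift := sum_shift
            (fun x => ψ (x - 2 ^ (m + 1) * k - 2 ^ m * l) * ψ (x - 2 ^ (m + 1) * n - 2 ^ m * l'))
            N hN (fun x => hfp x) (2 ^ (m + 1) * k + 2 ^ m * l)
          have he : ∀ j : ℕ, ψ ((j : ℤ) + (2 ^ (m + 1) * k + 2 ^ m * l) - 2 ^ (m + 1) * k - 2 ^ m * l) *
              ψ ((j : ℤ) + (2 ^ (m + 1) * k + 2 ^ m * l) - 2 ^ (m + 1) * n - 2 ^ m * l') =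
              ψ (j : ℤ) * ψ ((j : ℤ) - 2 ^ m * ((l' : ℤ) - ((l : ℤ) + 2 * d))) := by
            intro j
            congr 1
            · congr 1; ring
            · congr 1; rw [hd]; push_cast; ring
          calc ∑ j ∈ Finset.range N,
              (h l * ψ (((j : ℤ) - 2 ^ (m + 1) * k) - 2 ^ m * l)) *
              (h l' * ψ (((j : ℤ) - 2 ^ (m + 1) * n) - 2 ^ m * l'))
              = h l * h l' * ∑ j ∈ Finset.range N,
                  ψ ((j : ℤ) - 2 ^ (m + 1) * k - 2 ^ m * l) *
                  ψ ((j : ℤ) - 2 ^ (m + 1) * n - 2 ^ m * l') := by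
                rw [Finset.mul_sum]
                exact Finset.sum_congr rfl fun j _ => by ring
            _ = h l * h l' * ∑ j ∈ Finset.range N,
                  ψ (j : ℤ) * ψ ((j : ℤ) - 2 ^ m * ((l' : ℤ) - ((l : ℤ) + 2 * d))) := by
                rw [← hshift]
                congr 1
                exact Finset.sum_congr rfl fun j _ => he j
            _ = h l * h l' * (if (M : ℤ) ∣ ((l' : ℤ) - ((l : ℤ) + 2 * d)) then (1 : ℝ) else 0) := by
                rw [key]
  -- step 2 : collapse the l' sum
  have step2 : ∀ l : ℕ, (∑ l' ∈ Finset.range M, h l * h l' *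
      (if (M : ℤ) ∣ ((l' : ℤ) - ((l : ℤ) + 2 * d)) then (1 : ℝ) else 0)) =
      h l * h ((l : ℤ) + 2 * d) := by
    intro l
    have hpick := sum_ind_pick M hMpos (fun x => h l * h x)
      (fun x y hxy => by rw [hhdvd x y hxy]) ((l : ℤ) + 2 * d) 1
    simpa using hpick
  -- complex conjugation facts
  have hcζ : (starRingEnd ℂ) (omegaN M) = (omegaN M)⁻¹ := by
    rw [omegaN, ← Complex.exp_conj, ← Complex.exp_neg]
    congr 1
    simp only [map_div₀, map_mul, Complex.conj_I, map_ofNat, Complex.conj_ofReal,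
      Complex.conj_natCast]
    ring
  have hconj : ∀ z : ℤ, (starRingEnd ℂ) (omegaN M ^ z) = omegaN M ^ (-z) := fun z => by
    rw [map_zpow₀, hcζ, inv_zpow, ← zpow_neg]
  have hconjDFT : ∀ p : ℤ, (starRingEnd ℂ) (filterDFT M h p) =
      ∑ l' ∈ Finset.range M, (h l' : ℂ) * omegaN M ^ ((l' : ℤ) * p) := by
    intro p
    rw [filterDFT, map_sum]
    refine Finset.sum_congr rfl fun l' _ => ?_
    rw [map_mul, hconj, Complex.conj_ofReal, neg_neg]
  -- D1 : the autocorrelation identity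
  have hS1 : ∑ p ∈ Finset.range M,
      (filterDFT M h p * (starRingEnd ℂ) (filterDFT M h p)) * omegaN M ^ ((-(2 * d)) * (p : ℤ))
      = (M : ℂ) * ∑ l ∈ Finset.range M, (h l : ℂ) * (h ((l : ℤ) + 2 * d) : ℂ) := by
    calc ∑ p ∈ Finset.range M,
        (filterDFT M h p * (starRingEnd ℂ) (filterDFT M h p)) * omegaN M ^ ((-(2 * d)) * (p : ℤ))
        = ∑ p ∈ Finset.range M, ∑ l ∈ Finset.range M, ∑ l' ∈ Finset.range M,
            (h l : ℂ) * h l' * omegaN M ^ (((l' : ℤ) - ((l : ℤ) + 2 * d)) * (p : ℤ)) := by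
          refine Finset.sum_congr rfl fun p _ => ?_
          rw [hconjDFT, filterDFT, Finset.sum_mul_sum, Finset.sum_mul]
          refine Finset.sum_congr rfl fun l _ => ?_
          rw [Finset.sum_mul]
          refine Finset.sum_congr rfl fun l' _ => ?_
          calc (h l : ℂ) * omegaN M ^ (-((l : ℤ) * p)) *
                ((h l' : ℂ) * omegaN M ^ ((l' : ℤ) * p)) * omegaN M ^ ((-(2 * d)) * (p : ℤ))
              = (h l : ℂ) * h l' * (omegaN M ^ (-((l : ℤ) * p)) * omegaN M ^ ((l' : ℤ) * p) *
                  omegaN M ^ ((-(2 * d)) * (p : ℤ))) := by ring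
            _ = (h l : ℂ) * h l' * omegaN M ^ (((l' : ℤ) - ((l : ℤ) + 2 * d)) * (p : ℤ)) := by
                rw [← zpow_add₀ hζ0, ← zpow_add₀ hζ0]
                congr 1
                ring
      _ = ∑ l ∈ Finset.range M, ∑ p ∈ Finset.range M, ∑ l' ∈ Finset.range M,
            (h l : ℂ) * h l' * omegaN M ^ (((l' : ℤ) - ((l : ℤ) + 2 * d)) * (p : ℤ)) :=
          Finset.sum_comm
      _ = ∑ l ∈ Finset.range M, ∑ l' ∈ Finset.range M, ∑ p ∈ Finset.range M,
            (h l : ℂ) * h l' * omegaN M ^ (((l' : ℤ) - ((l : ℤ) + 2 * d)) * (p : ℤ)) :=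
          Finset.sum_congr rfl fun l _ => Finset.sum_comm
      _ = ∑ l ∈ Finset.range M, ∑ l' ∈ Finset.range M, ((h l : ℂ) * h l') *
            (if (M : ℤ) ∣ ((l' : ℤ) - ((l : ℤ) + 2 * d)) then (M : ℂ) else 0) := by
          refine Finset.sum_congr rfl fun l _ => Finset.sum_congr rfl fun l' _ => ?_
          rw [← Finset.mul_sum, sum_omega M hMpos]
      _ = ∑ l ∈ Finset.range M, ((h l : ℂ) * h ((l : ℤ) + 2 * d)) * (M : ℂ) := by
          refine Finset.sum_congr rfl fun l _ => ?_
          exact sum_ind_pick M hMpos (fun x => (h l : ℂ) * h x)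
            (fun x y hxy => by rw [hhdvd x y hxy]) ((l : ℤ) + 2 * d) (M : ℂ)
      _ = (M : ℂ) * ∑ l ∈ Finset.range M, (h l : ℂ) * (h ((l : ℤ) + 2 * d) : ℂ) := by
          rw [Finset.mul_sum]
          exact Finset.sum_congr rfl fun l _ => by ring
  -- D2 : evaluating the same sum using the filter condition
  have hζM : omegaN M ^ ((M : ℕ) : ℤ) = 1 := by
    rw [zpow_natCast]; exact hprimM.pow_eq_one
  have hS2 : ∑ p ∈ Finset.range M,
      (filterDFT M h p * (starRingEnd ℂ) (filterDFT M h p)) * omegaN M ^ ((-(2 * d)) * (p : ℤ))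
      = (M : ℂ) * (if d = 0 then 1 else 0) := by
    have habs : ∀ p : ℤ, filterDFT M h p * (starRingEnd ℂ) (filterDFT M h p) =
        ((‖filterDFT M h p‖ ^ 2 : ℝ) : ℂ) := by
      intro p
      rw [Complex.mul_conj, ← Complex.sq_norm]
    have hMLz : ((M : ℕ) : ℤ) = 2 * (L : ℤ) := by exact_mod_cast hML
    have hsq : omegaN M ^ (2 : ℤ) = omegaN L := by
      rw [omegaN, omegaN, show (2 : ℤ) = ((2 : ℕ) : ℤ) from rfl, zpow_natCast,
        ← Complex.exp_nat_mul]
      congr 1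
      have hMC : (M : ℂ) = 2 * L := by exact_mod_cast hML
      have hLC : (L : ℂ) ≠ 0 := by exact_mod_cast hLpos.ne'
      rw [hMC]
      field_simp
      ring
    have hζζ : ∀ p : ℕ, omegaN M ^ ((-(2 * d)) * (p : ℤ)) = omegaN L ^ ((-d) * (p : ℤ)) := by
      intro p
      rw [show (-(2 * d)) * (p : ℤ) = 2 * ((-d) * p) by ring, zpow_mul, hsq]
    have hdlt : |d| < (L : ℤ) := by
      rw [hd, abs_lt]
      constructor <;> omega
    calc ∑ p ∈ Finset.range M,
        (filterDFT M h p * (starRingEnd ℂ) (filterDFT M h p)) * omegaN M ^ ((-(2 * d)) * (p : ℤ))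
        = ∑ p ∈ Finset.range (L + L),
            ((‖filterDFT M h p‖ ^ 2 : ℝ) : ℂ) * omegaN M ^ ((-(2 * d)) * (p : ℤ)) := by
          rw [show Finset.range M = Finset.range (L + L) from by congr 1; omega]
          exact Finset.sum_congr rfl fun p _ => by rw [habs]
      _ = ∑ p ∈ Finset.range L,
            ((‖filterDFT M h p‖ ^ 2 : ℝ) : ℂ) * omegaN M ^ ((-(2 * d)) * (p : ℤ)) +
          ∑ p ∈ Finset.range L,
            ((‖filterDFT M h ((L + p : ℕ) : ℤ)‖ ^ 2 : ℝ) : ℂ) *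
              omegaN M ^ ((-(2 * d)) * ((L + p : ℕ) : ℤ)) :=
          Finset.sum_range_add _ L L
      _ = ∑ p ∈ Finset.range L,
            (((‖filterDFT M h p‖ ^ 2 +
               ‖filterDFT M h ((p : ℤ) + (L : ℤ))‖ ^ 2 : ℝ)) : ℂ) *
              omegaN M ^ ((-(2 * d)) * (p : ℤ)) := by
          rw [← Finset.sum_add_distrib]
          refine Finset.sum_congr rfl fun p _ => ?_
          have harg : ((L + p : ℕ) : ℤ) = (p : ℤ) + (L : ℤ) := by push_cast; ring
          have hexp : omegaN M ^ ((-(2 * d)) * ((L + p : ℕ) : ℤ)) =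
              omegaN M ^ ((-(2 * d)) * (p : ℤ)) := by
            rw [show (-(2 * d)) * ((L + p : ℕ) : ℤ) =
                (-(2 * d)) * (p : ℤ) + ((M : ℕ) : ℤ) * (-d) by rw [hMLz]; push_cast; ring,
              zpow_add₀ hζ0, zpow_mul (omegaN M) ((M : ℕ) : ℤ) (-d), hζM, one_zpow, mul_one]
          rw [hexp, harg]
          push_cast
          ring
      _ = ∑ p ∈ Finset.range L, 2 * omegaN L ^ ((-d) * (p : ℤ)) := by
          refine Finset.sum_congr rfl fun p _ => ?_
          rw [hfilter (p : ℤ), hζζ p]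
          norm_num
      _ = 2 * ∑ p ∈ Finset.range L, omegaN L ^ ((-d) * (p : ℤ)) := by
          rw [Finset.mul_sum]
      _ = 2 * (if (L : ℤ) ∣ (-d) then (L : ℂ) else 0) := by rw [sum_omega L hLpos]
      _ = (M : ℂ) * (if d = 0 then 1 else 0) := by
          have hMC : (M : ℂ) = 2 * L := by exact_mod_cast hML
          by_cases hd0 : d = 0
          · rw [if_pos hd0, if_pos (by rw [hd0]; exact dvd_zero _), hMC]
            ring
          · have hnd : ¬ ((L : ℤ) ∣ (-d)) := fun hc =>
              hd0 (Int.eq_zero_of_abs_lt_dvd (dvd_neg.mp hc) hdlt)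
            rw [if_neg hd0, if_neg hnd]
            ring
  -- combine
  have hceq : (∑ l ∈ Finset.range M, (h l : ℂ) * (h ((l : ℤ) + 2 * d) : ℂ)) =
      (if d = 0 then 1 else 0 : ℂ) :=
    mul_left_cancel₀ hMC0 (hS1.symm.trans hS2)
  have hcast : ((∑ l ∈ Finset.range M, h l * h ((l : ℤ) + 2 * d) : ℝ) : ℂ) =
      ∑ l ∈ Finset.range M, (h l : ℂ) * (h ((l : ℤ) + 2 * d) : ℂ) := by
    push_cast
    rfl
  have hfin : (∑ l ∈ Finset.range M, h l * h ((l : ℤ) + 2 * d)) =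
      (if d = 0 then (1 : ℝ) else 0) := by
    by_cases hd0 : d = 0
    · rw [if_pos hd0]
      apply Complex.ofReal_injective
      rw [hcast, hceq, if_pos hd0]
      norm_num
    · rw [if_neg hd0]
      apply Complex.ofReal_injective
      rw [hcast, hceq, if_neg hd0]
      norm_num
  have hiff : (d = 0) ↔ (k = n) := by
    constructor <;> intro hkn <;> omega
  calc ∑ j ∈ Finset.range N,
      (∑ l ∈ Finset.range M, h l * ψ (((j : ℤ) - 2 ^ (m + 1) * k) - 2 ^ m * l)) *
      (∑ l ∈ Finset.range M, h l * ψ (((j : ℤ) - 2 ^ (m + 1) * n) - 2 ^ m * l))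
      = ∑ l ∈ Finset.range M, ∑ l' ∈ Finset.range M, h l * h l' *
          (if (M : ℤ) ∣ ((l' : ℤ) - ((l : ℤ) + 2 * d)) then (1 : ℝ) else 0) := step1
    _ = ∑ l ∈ Finset.range M, h l * h ((l : ℤ) + 2 * d) :=
        Finset.sum_congr rfl fun l _ => step2 l
    _ = (if d = 0 then (1 : ℝ) else 0) := hfin
    _ = (if k = n then 1 else 0) := by
        simp only [hiff]
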